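/- The hyperplane arrangement I(D₄, 𝟖_v ⊕ 𝟖_s ⊕ 𝟖_c) has exactly six chambers, whose incidence graph is a hexagon. Concretely, the set C = {(t₁,t₂,t₃,t₄) ∈ ℝ⁴ : t₁,t₂,t₃,t₄ > 0 and each of the twelve linear forms 2t₁+2t₂+t₃+t₄, 2t₂+t₃+t₄, t₃+t₄, t₃−t₄, t₁+2t₂+2t₃+t₄, t₁+2t₂+t₄, t₁+t₄, t₄−t₁, t₁+2t₂+t₃+2t₄, t₁+2t₂+t₃, t₁+t₃, t₃−t₁ is nonzero} has exactly six connected components, namely the intersections of the open positive orthant with the six regions determined by the strict orderings of t₁, t₃, t₄ (each ordering occurs). -/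

import Mathlib

namespace D4Aux

def posS : Set (Fin 4 → ℝ) := {t | 0 < t 0 ∧ 0 < t 1 ∧ 0 < t 2 ∧ 0 < t 3}

def CS : Set (Fin 4 → ℝ) := {t | (0 < t 0 ∧ 0 < t 1 ∧ 0 < t 2 ∧ 0 < t 3) ∧
      2 * t 0 + 2 * t 1 + t 2 + t 3 ≠ 0 ∧ 2 * t 1 + t 2 + t 3 ≠ 0 ∧
      t 2 + t 3 ≠ 0 ∧ t 2 - t 3 ≠ 0 ∧
      t 0 + 2 * t 1 + 2 * t 2 + t 3 ≠ 0 ∧ t 0 + 2 * t 1 + t 3 ≠ 0 ∧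
      t 0 + t 3 ≠ 0 ∧ t 3 - t 0 ≠ 0 ∧
      t 0 + 2 * t 1 + t 2 + 2 * t 3 ≠ 0 ∧ t 0 + 2 * t 1 + t 2 ≠ 0 ∧
      t 0 + t 2 ≠ 0 ∧ t 2 - t 0 ≠ 0}

def B1 : Set (Fin 4 → ℝ) := posS ∩ {t | t 2 < t 0 ∧ t 3 < t 2}
def B2 : Set (Fin 4 → ℝ) := posS ∩ {t | t 0 < t 2 ∧ t 3 < t 0}
def B3 : Set (Fin 4 → ℝ) := posS ∩ {t | t 3 < t 2 ∧ t 0 < t 3}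
def B4 : Set (Fin 4 → ℝ) := posS ∩ {t | t 2 < t 3 ∧ t 0 < t 2}
def B5 : Set (Fin 4 → ℝ) := posS ∩ {t | t 0 < t 3 ∧ t 2 < t 0}
def B6 : Set (Fin 4 → ℝ) := posS ∩ {t | t 3 < t 0 ∧ t 2 < t 3}

lemma convex_lt (i j : Fin 4) : Convex ℝ {t : Fin 4 → ℝ | t i < t j} := by
  have : {t : Fin 4 → ℝ | t i < t j}
      = {t : Fin 4 → ℝ | (fun t : Fin 4 → ℝ => t i - t j) t < 0} := by
    ext t; simp [sub_neg]
  rw [this]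
  exact convex_halfSpace_lt ⟨fun x y => by simp [add_sub_add_comm], fun c x => by simp [mul_sub]⟩ 0

lemma convex_posS : Convex ℝ posS := by
  have h : ∀ i : Fin 4, Convex ℝ {t : Fin 4 → ℝ | 0 < t i} := fun i =>
    convex_halfSpace_gt ⟨fun x y => by simp, fun c x => by simp⟩ 0
  have : posS = {t : Fin 4 → ℝ | 0 < t 0} ∩ ({t | 0 < t 1} ∩ ({t | 0 < t 2} ∩ {t | 0 < t 3})) := by
    ext t; simp [posS, and_assoc]
  rw [this]
  exact (h 0).inter ((h 1).inter ((h 2).inter (h 3)))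

lemma open_lt (i j : Fin 4) : IsOpen {t : Fin 4 → ℝ | t i < t j} :=
  isOpen_lt (continuous_apply i) (continuous_apply j)

lemma open_posS : IsOpen posS := by
  have h : ∀ i : Fin 4, IsOpen {t : Fin 4 → ℝ | 0 < t i} := fun i =>
    isOpen_lt continuous_const (continuous_apply i)
  have : posS = {t : Fin 4 → ℝ | 0 < t 0} ∩ ({t | 0 < t 1} ∩ ({t | 0 < t 2} ∩ {t | 0 < t 3})) := by
    ext t; simp [posS, and_assoc]
  rw [this]
  exact (h 0).inter ((h 1).inter ((h 2).inter (h 3)))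

lemma convexB (i j k l : Fin 4) : Convex ℝ (posS ∩ {t : Fin 4 → ℝ | t i < t j ∧ t k < t l}) := by
  have : {t : Fin 4 → ℝ | t i < t j ∧ t k < t l}
      = {t : Fin 4 → ℝ | t i < t j} ∩ {t : Fin 4 → ℝ | t k < t l} := rfl
  rw [this]
  exact convex_posS.inter ((convex_lt i j).inter (convex_lt k l))

lemma openB (i j k l : Fin 4) : IsOpen (posS ∩ {t : Fin 4 → ℝ | t i < t j ∧ t k < t l}) := by
  have : {t : Fin 4 → ℝ | t i < t j ∧ t k < t l}
      = {t : Fin 4 → ℝ | t i < t j} ∩ {t : Fin 4 → ℝ | t k < t l} := rfl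
  rw [this]
  exact open_posS.inter ((open_lt i j).inter (open_lt k l))

lemma mem_CS {t : Fin 4 → ℝ} (p0 : 0 < t 0) (p1 : 0 < t 1) (p2 : 0 < t 2) (p3 : 0 < t 3)
    (h1 : t 2 ≠ t 3) (h2 : t 3 ≠ t 0) (h3 : t 2 ≠ t 0) : t ∈ CS := by
  rw [CS, Set.mem_setOf_eq]
  refine ⟨⟨p0, p1, p2, p3⟩, ?_, ?_, ?_, fun h => h1 (by linarith), ?_, ?_, ?_,
    fun h => h2 (by linarith), ?_, ?_, ?_, fun h => h3 (by linarith)⟩ <;>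
    (intro h; linarith)

lemma hC : CS = B1 ∪ B2 ∪ B3 ∪ B4 ∪ B5 ∪ B6 := by
  ext t
  constructor
  · intro ht
    rw [CS, Set.mem_setOf_eq] at ht
    obtain ⟨⟨p0, p1, p2, p3⟩, -, -, -, h4, -, -, -, h8, -, -, -, h12⟩ := ht
    have h23 := sub_ne_zero.mp h4
    have h30 := sub_ne_zero.mp h8
    have h20 := sub_ne_zero.mp h12
    simp only [Set.mem_union, B1, B2, B3, B4, B5, B6, posS, Set.mem_inter_iff, Set.mem_setOf_eq]
    rcases h23.lt_or_gt with a | a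
    · rcases h30.lt_or_gt with b | b
      · rcases h20.lt_or_gt with c | c
        · exact Or.inr ⟨⟨p0, p1, p2, p3⟩, b, a⟩
        · exfalso; linarith
      · rcases h20.lt_or_gt with c | c
        · exact Or.inl (Or.inr ⟨⟨p0, p1, p2, p3⟩, b, c⟩)
        · exact Or.inl (Or.inl (Or.inr ⟨⟨p0, p1, p2, p3⟩, a, c⟩))
    · rcases h30.lt_or_gt with b | b
      · rcases h20.lt_or_gt with c | c
        · exact Or.inl (Or.inl (Or.inl (Or.inl (Or.inl ⟨⟨p0, p1, p2, p3⟩, c, a⟩))))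
        · exact Or.inl (Or.inl (Or.inl (Or.inl (Or.inr ⟨⟨p0, p1, p2, p3⟩, c, b⟩))))
      · rcases h20.lt_or_gt with c | c
        · exfalso; linarith
        · exact Or.inl (Or.inl (Or.inl (Or.inr ⟨⟨p0, p1, p2, p3⟩, a, b⟩)))
  · intro ht
    simp only [Set.mem_union, B1, B2, B3, B4, B5, B6, posS, Set.mem_inter_iff,
      Set.mem_setOf_eq] at ht
    rcases ht with (((((⟨⟨p0,p1,p2,p3⟩,q1,q2⟩|⟨⟨p0,p1,p2,p3⟩,q1,q2⟩)|⟨⟨p0,p1,p2,p3⟩,q1,q2⟩)|⟨⟨p0,p1,p2,p3⟩,q1,q2⟩)|⟨⟨p0,p1,p2,p3⟩,q1,q2⟩)|⟨⟨p0,p1,p2,p3⟩,q1,q2⟩)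
    · exact mem_CS p0 p1 p2 p3 q2.ne' (show t 3 < t 0 by linarith).ne q1.ne
    · exact mem_CS p0 p1 p2 p3 (show t 3 < t 2 by linarith).ne' q2.ne q1.ne'
    · exact mem_CS p0 p1 p2 p3 q1.ne' q2.ne' (show t 0 < t 2 by linarith).ne'
    · exact mem_CS p0 p1 p2 p3 q1.ne (show t 0 < t 3 by linarith).ne' q2.ne'
    · exact mem_CS p0 p1 p2 p3 (show t 2 < t 3 by linarith).ne q1.ne' q2.ne
    · exact mem_CS p0 p1 p2 p3 q2.ne q1.ne (show t 2 < t 0 by linarith).ne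

lemma comp_eq {B R : Set (Fin 4 → ℝ)} (hU : CS = B ∪ R) (hB : IsOpen B) (hR : IsOpen R)
    (hc : Convex ℝ B) (hd : B ∩ R = ∅) {x} (hx : x ∈ B) :
    connectedComponentIn CS x = B := by
  have hBC : B ⊆ CS := hU ▸ Set.subset_union_left
  have hxC : x ∈ CS := hBC hx
  apply Set.Subset.antisymm
  · intro y hy
    by_contra hyB
    have hyR : y ∈ R := by
      have hyC : y ∈ CS := connectedComponentIn_subset CS x hy
      rcases hU ▸ hyC with h | h
      · exact absurd h hyB
      · exact h
    have hpre := (isPreconnected_connectedComponentIn (x := x) (F := CS))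
    have := hpre B R hB hR (by rw [← hU]; exact connectedComponentIn_subset CS x)
      ⟨x, mem_connectedComponentIn hxC, hx⟩ ⟨y, hy, hyR⟩
    rcases this with ⟨z, -, hz⟩
    rw [hd] at hz
    exact hz
  · exact hc.isPreconnected.subset_connectedComponentIn hx hBC


def w1 : Fin 4 → ℝ := ![3,1,2,1]
def w2 : Fin 4 → ℝ := ![2,1,3,1]
def w3 : Fin 4 → ℝ := ![1,1,3,2]
def w4 : Fin 4 → ℝ := ![1,1,2,3]
def w5 : Fin 4 → ℝ := ![2,1,1,3]
def w6 : Fin 4 → ℝ := ![3,1,1,2]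

lemma w1_mem : w1 ∈ B1 := by refine ⟨⟨?_,?_,?_,?_⟩,?_,?_⟩ <;> (simp [w1] <;> norm_num)
lemma w2_mem : w2 ∈ B2 := by refine ⟨⟨?_,?_,?_,?_⟩,?_,?_⟩ <;> (simp [w2] <;> norm_num)
lemma w3_mem : w3 ∈ B3 := by refine ⟨⟨?_,?_,?_,?_⟩,?_,?_⟩ <;> (simp [w3] <;> norm_num)
lemma w4_mem : w4 ∈ B4 := by refine ⟨⟨?_,?_,?_,?_⟩,?_,?_⟩ <;> (simp [w4] <;> norm_num)
lemma w5_mem : w5 ∈ B5 := by refine ⟨⟨?_,?_,?_,?_⟩,?_,?_⟩ <;> (simp [w5] <;> norm_num)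
lemma w6_mem : w6 ∈ B6 := by refine ⟨⟨?_,?_,?_,?_⟩,?_,?_⟩ <;> (simp [w6] <;> norm_num)

lemma disj12 : B1 ≠ B2 := by
  intro h; have := h ▸ w1_mem; rcases this with ⟨-, h1, h2⟩; simp [w1] at h1 h2 <;> linarith
lemma disj13 : B1 ≠ B3 := by
  intro h; have := h ▸ w1_mem; rcases this with ⟨-, h1, h2⟩; simp [w1] at h1 h2 <;> norm_num at h1 h2
lemma disj14 : B1 ≠ B4 := by
  intro h; have := h ▸ w1_mem; rcases this with ⟨-, h1, h2⟩; simp [w1] at h1 h2 <;> norm_num at h1 h2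
lemma disj15 : B1 ≠ B5 := by
  intro h; have := h ▸ w1_mem; rcases this with ⟨-, h1, h2⟩; simp [w1] at h1 h2 <;> norm_num at h1 h2
lemma disj16 : B1 ≠ B6 := by
  intro h; have := h ▸ w1_mem; rcases this with ⟨-, h1, h2⟩; simp [w1] at h1 h2 <;> norm_num at h1 h2
lemma disj23 : B2 ≠ B3 := by
  intro h; have := h ▸ w2_mem; rcases this with ⟨-, h1, h2⟩; simp [w2] at h1 h2 <;> norm_num at h1 h2
lemma disj24 : B2 ≠ B4 := by
  intro h; have := h ▸ w2_mem; rcases this with ⟨-, h1, h2⟩; simp [w2] at h1 h2 <;> norm_num at h1 h2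
lemma disj25 : B2 ≠ B5 := by
  intro h; have := h ▸ w2_mem; rcases this with ⟨-, h1, h2⟩; simp [w2] at h1 h2 <;> norm_num at h1 h2
lemma disj26 : B2 ≠ B6 := by
  intro h; have := h ▸ w2_mem; rcases this with ⟨-, h1, h2⟩; simp [w2] at h1 h2 <;> norm_num at h1 h2
lemma disj34 : B3 ≠ B4 := by
  intro h; have := h ▸ w3_mem; rcases this with ⟨-, h1, h2⟩; simp [w3] at h1 h2 <;> linarith
lemma disj35 : B3 ≠ B5 := by
  intro h; have := h ▸ w3_mem; rcases this with ⟨-, h1, h2⟩; simp [w3] at h1 h2 <;> norm_num at h1 h2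
lemma disj36 : B3 ≠ B6 := by
  intro h; have := h ▸ w3_mem; rcases this with ⟨-, h1, h2⟩; simp [w3] at h1 h2 <;> norm_num at h1 h2
lemma disj45 : B4 ≠ B5 := by
  intro h; have := h ▸ w4_mem; rcases this with ⟨-, h1, h2⟩; simp [w4] at h1 h2 <;> norm_num at h1 h2
lemma disj46 : B4 ≠ B6 := by
  intro h; have := h ▸ w4_mem; rcases this with ⟨-, h1, h2⟩; simp [w4] at h1 h2 <;> norm_num at h1 h2
lemma disj56 : B5 ≠ B6 := by
  intro h; have := h ▸ w5_mem; rcases this with ⟨-, h1, h2⟩; simp [w5] at h1 h2 <;> linarith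


lemma hU1 : CS = B1 ∪ (B2 ∪ B3 ∪ B4 ∪ B5 ∪ B6) := by
  rw [hC]; ext t; simp only [Set.mem_union]; tauto
lemma hU2 : CS = B2 ∪ (B1 ∪ B3 ∪ B4 ∪ B5 ∪ B6) := by
  rw [hC]; ext t; simp only [Set.mem_union]; tauto
lemma hU3 : CS = B3 ∪ (B1 ∪ B2 ∪ B4 ∪ B5 ∪ B6) := by
  rw [hC]; ext t; simp only [Set.mem_union]; tauto
lemma hU4 : CS = B4 ∪ (B1 ∪ B2 ∪ B3 ∪ B5 ∪ B6) := by
  rw [hC]; ext t; simp only [Set.mem_union]; tauto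
lemma hU5 : CS = B5 ∪ (B1 ∪ B2 ∪ B3 ∪ B4 ∪ B6) := by
  rw [hC]; ext t; simp only [Set.mem_union]; tauto
lemma hU6 : CS = B6 ∪ (B1 ∪ B2 ∪ B3 ∪ B4 ∪ B5) := by
  rw [hC]; ext t; simp only [Set.mem_union]; tauto

lemma hd1 : B1 ∩ (B2 ∪ B3 ∪ B4 ∪ B5 ∪ B6) = ∅ := by
  ext t
  simp only [B1, B2, B3, B4, B5, B6, posS, Set.mem_inter_iff, Set.mem_union,
    Set.mem_setOf_eq, Set.mem_empty_iff_false, iff_false]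
  rintro ⟨⟨-,q1,q2⟩, ((((⟨-,r1,r2⟩|⟨-,r1,r2⟩)|⟨-,r1,r2⟩)|⟨-,r1,r2⟩)|⟨-,r1,r2⟩)⟩ <;> linarith
lemma hd2 : B2 ∩ (B1 ∪ B3 ∪ B4 ∪ B5 ∪ B6) = ∅ := by
  ext t
  simp only [B1, B2, B3, B4, B5, B6, posS, Set.mem_inter_iff, Set.mem_union,
    Set.mem_setOf_eq, Set.mem_empty_iff_false, iff_false]
  rintro ⟨⟨-,q1,q2⟩, ((((⟨-,r1,r2⟩|⟨-,r1,r2⟩)|⟨-,r1,r2⟩)|⟨-,r1,r2⟩)|⟨-,r1,r2⟩)⟩ <;> linarith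
lemma hd3 : B3 ∩ (B1 ∪ B2 ∪ B4 ∪ B5 ∪ B6) = ∅ := by
  ext t
  simp only [B1, B2, B3, B4, B5, B6, posS, Set.mem_inter_iff, Set.mem_union,
    Set.mem_setOf_eq, Set.mem_empty_iff_false, iff_false]
  rintro ⟨⟨-,q1,q2⟩, ((((⟨-,r1,r2⟩|⟨-,r1,r2⟩)|⟨-,r1,r2⟩)|⟨-,r1,r2⟩)|⟨-,r1,r2⟩)⟩ <;> linarith
lemma hd4 : B4 ∩ (B1 ∪ B2 ∪ B3 ∪ B5 ∪ B6) = ∅ := by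
  ext t
  simp only [B1, B2, B3, B4, B5, B6, posS, Set.mem_inter_iff, Set.mem_union,
    Set.mem_setOf_eq, Set.mem_empty_iff_false, iff_false]
  rintro ⟨⟨-,q1,q2⟩, ((((⟨-,r1,r2⟩|⟨-,r1,r2⟩)|⟨-,r1,r2⟩)|⟨-,r1,r2⟩)|⟨-,r1,r2⟩)⟩ <;> linarith
lemma hd5 : B5 ∩ (B1 ∪ B2 ∪ B3 ∪ B4 ∪ B6) = ∅ := by
  ext t
  simp only [B1, B2, B3, B4, B5, B6, posS, Set.mem_inter_iff, Set.mem_union,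
    Set.mem_setOf_eq, Set.mem_empty_iff_false, iff_false]
  rintro ⟨⟨-,q1,q2⟩, ((((⟨-,r1,r2⟩|⟨-,r1,r2⟩)|⟨-,r1,r2⟩)|⟨-,r1,r2⟩)|⟨-,r1,r2⟩)⟩ <;> linarith
lemma hd6 : B6 ∩ (B1 ∪ B2 ∪ B3 ∪ B4 ∪ B5) = ∅ := by
  ext t
  simp only [B1, B2, B3, B4, B5, B6, posS, Set.mem_inter_iff, Set.mem_union,
    Set.mem_setOf_eq, Set.mem_empty_iff_false, iff_false]
  rintro ⟨⟨-,q1,q2⟩, ((((⟨-,r1,r2⟩|⟨-,r1,r2⟩)|⟨-,r1,r2⟩)|⟨-,r1,r2⟩)|⟨-,r1,r2⟩)⟩ <;> linarith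

lemma oB1 : IsOpen B1 := by rw [B1]; exact openB 2 0 3 2
lemma oB2 : IsOpen B2 := by rw [B2]; exact openB 0 2 3 0
lemma oB3 : IsOpen B3 := by rw [B3]; exact openB 3 2 0 3
lemma oB4 : IsOpen B4 := by rw [B4]; exact openB 2 3 0 2
lemma oB5 : IsOpen B5 := by rw [B5]; exact openB 0 3 2 0
lemma oB6 : IsOpen B6 := by rw [B6]; exact openB 3 0 2 3

lemma cB1 : Convex ℝ B1 := by rw [B1]; exact convexB 2 0 3 2
lemma cB2 : Convex ℝ B2 := by rw [B2]; exact convexB 0 2 3 0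
lemma cB3 : Convex ℝ B3 := by rw [B3]; exact convexB 3 2 0 3
lemma cB4 : Convex ℝ B4 := by rw [B4]; exact convexB 2 3 0 2
lemma cB5 : Convex ℝ B5 := by rw [B5]; exact convexB 0 3 2 0
lemma cB6 : Convex ℝ B6 := by rw [B6]; exact convexB 3 0 2 3

lemma comp1 {x} (hx : x ∈ B1) : connectedComponentIn CS x = B1 :=
  comp_eq hU1 oB1 ((((oB2.union oB3).union oB4).union oB5).union oB6) cB1 hd1 hx
lemma comp2 {x} (hx : x ∈ B2) : connectedComponentIn CS x = B2 :=
  comp_eq hU2 oB2 ((((oB1.union oB3).union oB4).union oB5).union oB6) cB2 hd2 hx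
lemma comp3 {x} (hx : x ∈ B3) : connectedComponentIn CS x = B3 :=
  comp_eq hU3 oB3 ((((oB1.union oB2).union oB4).union oB5).union oB6) cB3 hd3 hx
lemma comp4 {x} (hx : x ∈ B4) : connectedComponentIn CS x = B4 :=
  comp_eq hU4 oB4 ((((oB1.union oB2).union oB3).union oB5).union oB6) cB4 hd4 hx
lemma comp5 {x} (hx : x ∈ B5) : connectedComponentIn CS x = B5 :=
  comp_eq hU5 oB5 ((((oB1.union oB2).union oB3).union oB4).union oB6) cB5 hd5 hx
lemma comp6 {x} (hx : x ∈ B6) : connectedComponentIn CS x = B6 :=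
  comp_eq hU6 oB6 ((((oB1.union oB2).union oB3).union oB4).union oB5) cB6 hd6 hx

lemma sub1 : B1 ⊆ CS := by rw [hU1]; exact Set.subset_union_left
lemma sub2 : B2 ⊆ CS := by rw [hU2]; exact Set.subset_union_left
lemma sub3 : B3 ⊆ CS := by rw [hU3]; exact Set.subset_union_left
lemma sub4 : B4 ⊆ CS := by rw [hU4]; exact Set.subset_union_left
lemma sub5 : B5 ⊆ CS := by rw [hU5]; exact Set.subset_union_left
lemma sub6 : B6 ⊆ CS := by rw [hU6]; exact Set.subset_union_left

lemma main_eq : {s : Set (Fin 4 → ℝ) | ∃ x ∈ CS, s = connectedComponentIn CS x}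
    = {B1, B2, B3, B4, B5, B6} := by
  ext s
  simp only [Set.mem_setOf_eq, Set.mem_insert_iff, Set.mem_singleton_iff]
  constructor
  · rintro ⟨x, hx, rfl⟩
    rw [hC] at hx
    rcases hx with (((((h|h)|h)|h)|h)|h)
    · exact Or.inl (comp1 h)
    · exact Or.inr (Or.inl (comp2 h))
    · exact Or.inr (Or.inr (Or.inl (comp3 h)))
    · exact Or.inr (Or.inr (Or.inr (Or.inl (comp4 h))))
    · exact Or.inr (Or.inr (Or.inr (Or.inr (Or.inl (comp5 h)))))
    · exact Or.inr (Or.inr (Or.inr (Or.inr (Or.inr (comp6 h)))))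
  · rintro (rfl|rfl|rfl|rfl|rfl|rfl)
    · exact ⟨w1, sub1 w1_mem, (comp1 w1_mem).symm⟩
    · exact ⟨w2, sub2 w2_mem, (comp2 w2_mem).symm⟩
    · exact ⟨w3, sub3 w3_mem, (comp3 w3_mem).symm⟩
    · exact ⟨w4, sub4 w4_mem, (comp4 w4_mem).symm⟩
    · exact ⟨w5, sub5 w5_mem, (comp5 w5_mem).symm⟩
    · exact ⟨w6, sub6 w6_mem, (comp6 w6_mem).symm⟩

lemma main_card : ({B1, B2, B3, B4, B5, B6} : Set (Set (Fin 4 → ℝ))).ncard = 6 := by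
  rw [Set.ncard_insert_of_notMem (by simp [disj12, disj13, disj14, disj15, disj16]),
      Set.ncard_insert_of_notMem (by simp [disj23, disj24, disj25, disj26]),
      Set.ncard_insert_of_notMem (by simp [disj34, disj35, disj36]),
      Set.ncard_insert_of_notMem (by simp [disj45, disj46]),
      Set.ncard_pair disj56]

end D4Aux

/-- The hyperplane arrangement I(D₄, 𝟖_v ⊕ 𝟖_s ⊕ 𝟖_c) has exactly six chambers: the
complement, in the open positive orthant of coordinates `t_i = ⟨α_i, φ⟩` (with `t 0 = t₁`,
`t 1 = t₂`, `t 2 = t₃`, `t 3 = t₄`), of the kernels of the twelve listed linear forms has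
exactly six connected components, namely the intersections of the open positive orthant
with the six regions determined by the strict orderings of `t₁, t₃, t₄`. -/
theorem D4_8v8s8c_six_chambers :
    let pos : Set (Fin 4 → ℝ) := {t | 0 < t 0 ∧ 0 < t 1 ∧ 0 < t 2 ∧ 0 < t 3}
    let C : Set (Fin 4 → ℝ) := {t | (0 < t 0 ∧ 0 < t 1 ∧ 0 < t 2 ∧ 0 < t 3) ∧
      2 * t 0 + 2 * t 1 + t 2 + t 3 ≠ 0 ∧ 2 * t 1 + t 2 + t 3 ≠ 0 ∧
      t 2 + t 3 ≠ 0 ∧ t 2 - t 3 ≠ 0 ∧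
      t 0 + 2 * t 1 + 2 * t 2 + t 3 ≠ 0 ∧ t 0 + 2 * t 1 + t 3 ≠ 0 ∧
      t 0 + t 3 ≠ 0 ∧ t 3 - t 0 ≠ 0 ∧
      t 0 + 2 * t 1 + t 2 + 2 * t 3 ≠ 0 ∧ t 0 + 2 * t 1 + t 2 ≠ 0 ∧
      t 0 + t 2 ≠ 0 ∧ t 2 - t 0 ≠ 0}
    -- the six orderings of (t₁, t₃, t₄) = (t 0, t 2, t 3)
    let A1 : Set (Fin 4 → ℝ) := pos ∩ {t | t 2 < t 0 ∧ t 3 < t 2}  -- t₁ > t₃ > t₄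
    let A2 : Set (Fin 4 → ℝ) := pos ∩ {t | t 0 < t 2 ∧ t 3 < t 0}  -- t₃ > t₁ > t₄
    let A3 : Set (Fin 4 → ℝ) := pos ∩ {t | t 3 < t 2 ∧ t 0 < t 3}  -- t₃ > t₄ > t₁
    let A4 : Set (Fin 4 → ℝ) := pos ∩ {t | t 2 < t 3 ∧ t 0 < t 2}  -- t₄ > t₃ > t₁
    let A5 : Set (Fin 4 → ℝ) := pos ∩ {t | t 0 < t 3 ∧ t 2 < t 0}  -- t₄ > t₁ > t₃
    let A6 : Set (Fin 4 → ℝ) := pos ∩ {t | t 3 < t 0 ∧ t 2 < t 3}  -- t₁ > t₄ > t₃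
    ({s : Set (Fin 4 → ℝ) | ∃ x ∈ C, s = connectedComponentIn C x} =
      {A1, A2, A3, A4, A5, A6}) ∧
    ({A1, A2, A3, A4, A5, A6} : Set (Set (Fin 4 → ℝ))).ncard = 6 := by
  intro pos C A1 A2 A3 A4 A5 A6
  exact ⟨D4Aux.main_eq, D4Aux.main_card⟩
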